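/- Let q be a prime power, λ the canonical additive character of F_q, m ≥ 1, and β ∈ F_q. Then Σ_{a ∈ F_q*} λ(−aβ) K_m(λ;a) equals q·K_{m−1}(λ;β⁻¹) + (−1)^{m+1} if β ≠ 0, and equals (−1)^{m+1} if β = 0, with the convention K₀(λ;γ) = λ(γ). -/

import Mathlib

open Finset
open scoped Classical

noncomputable instance (p n : ℕ) [Fact p.Prime] : Fintype (GaloisField p n) :=
  Fintype.ofFinite _

/-- The canonical additive character of `𝔽_{p^r}`:
`λ(x) = exp(2πi · tr(x)/p)` where `tr` is the absolute trace to `𝔽_p`. -/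
noncomputable def canChar (p r : ℕ) [Fact p.Prime] (x : GaloisField p r) : ℂ :=
  Complex.exp (2 * Real.pi * Complex.I *
    (((Algebra.trace (ZMod p) (GaloisField p r) x).val : ℂ)) / p)

/-- The `m`-dimensional Kloosterman sum
`K_m(λ;a) = Σ_{x₁,…,x_m ∈ 𝔽_q*} λ(x₁+⋯+x_m + a x₁⁻¹⋯x_m⁻¹)`.
For `m = 0` this is `λ(a)`, matching the convention `K₀(λ;γ) = λ(γ)`. -/
noncomputable def Km (p r : ℕ) [Fact p.Prime] (m : ℕ) (a : GaloisField p r) : ℂ :=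
  ∑ x ∈ Finset.univ.filter (fun x : Fin m → GaloisField p r => ∀ i, x i ≠ 0),
    canChar p r (∑ i, x i + a * (∏ i, x i)⁻¹)

section psi
variable (p r : ℕ) [Fact p.Prime]

lemma zeta_pow_p : (Complex.exp (2 * Real.pi * Complex.I / p)) ^ p = 1 := by
  rw [← Complex.exp_nat_mul]
  have hp : (p : ℂ) ≠ 0 := Nat.cast_ne_zero.mpr (Fact.out : p.Prime).ne_zero
  rw [show (p : ℂ) * (2 * Real.pi * Complex.I / p) = 2 * Real.pi * Complex.I by
    field_simp]
  exact Complex.exp_two_pi_mul_I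

noncomputable def psi : AddChar (GaloisField p r) ℂ :=
  (AddChar.zmodChar p (zeta_pow_p p)).compAddMonoidHom
    (Algebra.trace (ZMod p) (GaloisField p r)).toAddMonoidHom

lemma canChar_eq (x : GaloisField p r) : canChar p r x = psi p r x := by
  simp only [psi, AddChar.compAddMonoidHom_apply, AddChar.zmodChar_apply,
    LinearMap.toAddMonoidHom_coe, canChar]
  rw [← Complex.exp_nat_mul]
  ring_nf

lemma psi_ne_one (hr : 1 ≤ r) : psi p r ≠ 1 := by
  have hp : p.Prime := Fact.out
  obtain ⟨b, hb⟩ := Algebra.trace_surjective (ZMod p) (GaloisField p r) 1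
  intro h
  have hb1 : psi p r b = 1 := by rw [h]; rfl
  rw [psi, AddChar.compAddMonoidHom_apply, AddChar.zmodChar_apply,
    LinearMap.toAddMonoidHom_coe, hb] at hb1
  have hv : (1 : ZMod p).val = 1 := ZMod.val_one p
  rw [hv, pow_one] at hb1
  exact (Complex.isPrimitiveRoot_exp p hp.ne_zero).ne_one hp.one_lt hb1

lemma psi_sum_mulShift (hr : 1 ≤ r) (b : GaloisField p r) :
    ∑ a : GaloisField p r, psi p r (a * b) =
      if b = 0 then (Fintype.card (GaloisField p r) : ℂ) else 0 := by
  have := AddChar.sum_mulShift b (AddChar.IsPrimitive.of_ne_one (psi_ne_one p r hr))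
  rw [this]; split_ifs <;> simp

lemma card_gf (hr : 1 ≤ r) : (Fintype.card (GaloisField p r) : ℂ) = (p : ℂ) ^ r := by
  rw [← Nat.card_eq_fintype_card, GaloisField.card p r (Nat.one_le_iff_ne_zero.mp hr)]
  push_cast; ring

lemma psi_map_sum {ι : Type*} (s : Finset ι) (f : ι → GaloisField p r) :
    psi p r (∑ i ∈ s, f i) = ∏ i ∈ s, psi p r (f i) := by
  induction s using Finset.cons_induction with
  | empty => simp
  | cons a s ha ih =>
    rw [Finset.sum_cons, Finset.prod_cons, AddChar.map_add_eq_mul, ih]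

lemma psi_sum_ne_zero (hr : 1 ≤ r) :
    ∑ t ∈ (univ \ {0} : Finset (GaloisField p r)), psi p r t = -1 := by
  rw [Finset.sum_sdiff_eq_sub (by simp), AddChar.sum_eq_zero_of_ne_one (psi_ne_one p r hr)]
  simp

lemma filter_eq_piFinset (m : ℕ) :
    (Finset.univ.filter (fun x : Fin m → GaloisField p r => ∀ i, x i ≠ 0)) =
      Fintype.piFinset (fun _ : Fin m => (univ \ {0} : Finset (GaloisField p r))) := by
  ext x; simp

lemma sum_L (hr : 1 ≤ r) (m : ℕ) :
    ∑ x ∈ Finset.univ.filter (fun x : Fin m → GaloisField p r => ∀ i, x i ≠ 0),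
      psi p r (∑ i, x i) = (-1 : ℂ) ^ m := by
  rw [filter_eq_piFinset]
  have := Finset.prod_univ_sum (fun _ : Fin m => (univ \ {0} : Finset (GaloisField p r)))
    (fun _ t => psi p r t)
  simp only [psi_sum_ne_zero p r hr, Finset.prod_const, Finset.card_univ,
    Fintype.card_fin] at this
  calc ∑ x ∈ Fintype.piFinset fun _ : Fin m => (univ \ {0} : Finset (GaloisField p r)),
        psi p r (∑ i, x i)
      = ∑ x ∈ Fintype.piFinset fun _ : Fin m => (univ \ {0} : Finset (GaloisField p r)),
        ∏ i, psi p r (x i) := by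
        refine Finset.sum_congr rfl fun x _ => ?_
        exact psi_map_sum p r univ x
    _ = (-1 : ℂ) ^ m := this.symm

lemma sum_filter_eq (n : ℕ) {β : GaloisField p r} (hβ : β ≠ 0) :
    ∑ x ∈ (Finset.univ.filter (fun x : Fin (n+1) → GaloisField p r => ∀ i, x i ≠ 0)).filter
        (fun x => (∏ i, x i)⁻¹ = β), psi p r (∑ i, x i) = Km p r n β⁻¹ := by
  rw [Km]
  refine Finset.sum_nbij' (i := fun x => Fin.init x)
    (j := fun y => Fin.snoc y (β⁻¹ * (∏ i, y i)⁻¹)) ?_ ?_ ?_ ?_ ?_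
  · intro x hx
    simp only [mem_filter, mem_univ, true_and] at hx ⊢
    intro i
    exact hx.1 i.castSucc
  · intro y hy
    simp only [mem_filter, mem_univ, true_and] at hy ⊢
    have hP : (∏ i, y i) ≠ 0 := Finset.prod_ne_zero_iff.mpr fun i _ => hy i
    have ht : β⁻¹ * (∏ i, y i)⁻¹ ≠ 0 := by
      exact mul_ne_zero (inv_ne_zero hβ) (inv_ne_zero hP)
    constructor
    · intro i
      induction i using Fin.lastCases with
      | last => simpa using ht
      | cast j => simpa using hy j
    · rw [Fin.prod_univ_castSucc]
      simp only [Fin.snoc_castSucc, Fin.snoc_last]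
      rw [show (∏ i : Fin n, y i) * (β⁻¹ * (∏ i, y i)⁻¹) = β⁻¹ by
        field_simp]
      exact inv_inv β
  · intro x hx
    simp only [mem_filter, mem_univ, true_and] at hx
    have hPx : (∏ i, x i) = β⁻¹ := inv_eq_iff_eq_inv.mp hx.2
    have hP : (∏ i : Fin n, Fin.init x i) ≠ 0 :=
      Finset.prod_ne_zero_iff.mpr fun i _ => hx.1 i.castSucc
    have hlast : x (Fin.last n) = β⁻¹ * (∏ i : Fin n, Fin.init x i)⁻¹ := by
      apply mul_left_cancel₀ hP
      rw [show (∏ i : Fin n, Fin.init x i) * (β⁻¹ * (∏ i : Fin n, Fin.init x i)⁻¹) = β⁻¹ by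
        field_simp]
      rw [← hPx, Fin.prod_univ_castSucc]
      rfl
    show Fin.snoc (Fin.init x) (β⁻¹ * (∏ i : Fin n, Fin.init x i)⁻¹) = x
    rw [← hlast]
    exact Fin.snoc_init_self x
  · intro y hy
    exact Fin.init_snoc _ _
  · intro x hx
    simp only [mem_filter, mem_univ, true_and] at hx
    have hPx : (∏ i, x i) = β⁻¹ := inv_eq_iff_eq_inv.mp hx.2
    have hP : (∏ i : Fin n, Fin.init x i) ≠ 0 :=
      Finset.prod_ne_zero_iff.mpr fun i _ => hx.1 i.castSucc
    have hlast : x (Fin.last n) = β⁻¹ * (∏ i : Fin n, Fin.init x i)⁻¹ := by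
      apply mul_left_cancel₀ hP
      rw [show (∏ i : Fin n, Fin.init x i) * (β⁻¹ * (∏ i : Fin n, Fin.init x i)⁻¹) = β⁻¹ by
        field_simp]
      rw [← hPx, Fin.prod_univ_castSucc]
      rfl
    rw [canChar_eq]
    congr 1
    rw [Fin.sum_univ_castSucc, hlast]
    rfl

end psi

theorem stmt4 (p r : ℕ) [Fact p.Prime] (hr : 1 ≤ r) (m : ℕ) (hm : 1 ≤ m)
    (β : GaloisField p r) :
    (β ≠ 0 →
      ∑ a ∈ (Finset.univ \ {0} : Finset (GaloisField p r)),
          canChar p r (-a * β) * Km p r m a =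
        (p : ℂ) ^ r * Km p r (m - 1) β⁻¹ + (-1 : ℂ) ^ (m + 1)) ∧
    (β = 0 →
      ∑ a ∈ (Finset.univ \ {0} : Finset (GaloisField p r)),
          canChar p r (-a * β) * Km p r m a = (-1 : ℂ) ^ (m + 1)) := by
  obtain ⟨n, rfl⟩ : ∃ n, m = n + 1 := ⟨m - 1, (Nat.succ_pred_eq_of_pos hm).symm⟩
  set S := Finset.univ.filter (fun x : Fin (n+1) → GaloisField p r => ∀ i, x i ≠ 0) with hS
  have key : ∀ γ : GaloisField p r,
      ∑ a ∈ (univ \ {0} : Finset (GaloisField p r)), canChar p r (-a*γ) * Km p r (n+1) a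
      = (p:ℂ)^r * (∑ x ∈ S.filter (fun x => (∏ i, x i)⁻¹ = γ), psi p r (∑ i, x i))
        + (-1:ℂ)^(n+2) := by
    intro γ
    have step1 : ∀ a : GaloisField p r, canChar p r (-a*γ) * Km p r (n+1) a
        = ∑ x ∈ S, psi p r (∑ i, x i) * psi p r (a * ((∏ i, x i)⁻¹ - γ)) := by
      intro a
      rw [Km, Finset.mul_sum]
      refine Finset.sum_congr rfl fun x _ => ?_
      rw [canChar_eq, canChar_eq, ← AddChar.map_add_eq_mul, ← AddChar.map_add_eq_mul]
      congr 1
      ring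
    simp_rw [step1]
    rw [Finset.sum_comm]
    have step2 : ∀ x : Fin (n+1) → GaloisField p r,
        ∑ a ∈ (univ \ {0} : Finset (GaloisField p r)),
          psi p r (∑ i, x i) * psi p r (a * ((∏ i, x i)⁻¹ - γ))
        = psi p r (∑ i, x i) * ((if (∏ i, x i)⁻¹ - γ = 0 then (p:ℂ)^r else 0) - 1) := by
      intro x
      rw [← Finset.mul_sum]
      congr 1
      rw [Finset.sum_sdiff_eq_sub (by simp : ({0}:Finset (GaloisField p r)) ⊆ univ),
        psi_sum_mulShift p r hr, card_gf p r hr]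
      simp
    calc ∑ x ∈ S, ∑ a ∈ (univ \ {0} : Finset (GaloisField p r)),
          psi p r (∑ i, x i) * psi p r (a * ((∏ i, x i)⁻¹ - γ))
        = ∑ x ∈ S, psi p r (∑ i, x i) *
            ((if (∏ i, x i)⁻¹ - γ = 0 then (p:ℂ)^r else 0) - 1) := by
          exact Finset.sum_congr rfl fun x _ => step2 x
      _ = (∑ x ∈ S, if (∏ i, x i)⁻¹ = γ then (p:ℂ)^r * psi p r (∑ i, x i) else 0)
            - ∑ x ∈ S, psi p r (∑ i, x i) := by
          rw [← Finset.sum_sub_distrib]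
          refine Finset.sum_congr rfl fun x _ => ?_
          rw [sub_eq_zero]
          split_ifs <;> ring
      _ = (p:ℂ)^r * (∑ x ∈ S.filter (fun x => (∏ i, x i)⁻¹ = γ), psi p r (∑ i, x i))
            + (-1:ℂ)^(n+2) := by
          have h1 : (p:ℂ)^r * ∑ x ∈ S.filter (fun x => (∏ i, x i)⁻¹ = γ), psi p r (∑ i, x i)
              = ∑ x ∈ S, if (∏ i, x i)⁻¹ = γ then (p:ℂ)^r * psi p r (∑ i, x i) else 0 := by
            rw [Finset.mul_sum]
            exact Finset.sum_filter _ _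
          have h2 : ∑ x ∈ S, psi p r (∑ i, x i) = (-1:ℂ)^(n+1) := by
            rw [hS]; exact sum_L p r hr (n+1)
          rw [← h1, h2]; ring
  constructor
  · intro hβ
    rw [key β, sum_filter_eq p r n hβ]
    norm_num
  · intro hβ
    subst hβ
    rw [key 0]
    have hempty : S.filter (fun x => (∏ i, x i)⁻¹ = (0 : GaloisField p r)) = ∅ := by
      refine Finset.filter_eq_empty_iff.mpr fun x hx => ?_
      rw [hS, Finset.mem_filter] at hx
      rw [inv_eq_zero]
      exact Finset.prod_ne_zero_iff.mpr fun i _ => hx.2 i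
    rw [hempty]
    norm_num
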